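/- (Proposition 1, edges sharing one node, SNPs in different SNP-sets) Let v1, v2, v3 be pairwise distinct nodes and p ≠ p' be distinct SNPs with q(p) ≠ q(p'), and assume σ_f² + 2σ_g² + 2σ_h² > 0. Then Cor(L(v1,v3,p), L(v2,v3,p')) = σ_g²/(σ_f² + 2σ_g² + 2σ_h²). -/

import Mathlib

open MeasureTheory ProbabilityTheory

/-- Covariance of two real random variables: `Cov(X,Y) = E[(X - E X)(Y - E Y)]`. -/
noncomputable def cov {Ω : Type*} [MeasurableSpace Ω] (μ : Measure Ω) (X Y : Ω → ℝ) : ℝ :=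
  ∫ ω, (X ω - ∫ x, X x ∂μ) * (Y ω - ∫ x, Y x ∂μ) ∂μ

/-- Pearson correlation: `Cor(X,Y) = Cov(X,Y) / (Var(X)^{1/2} Var(Y)^{1/2})`. -/
noncomputable def cor {Ω : Type*} [MeasurableSpace Ω] (μ : Measure Ω) (X Y : Ω → ℝ) : ℝ :=
  cov μ X Y / (Real.sqrt (variance X μ) * Real.sqrt (variance Y μ))

section Aux

variable {Ω : Type*} [MeasurableSpace Ω] {μ : Measure Ω} [IsProbabilityMeasure μ]
variable {X Y : Ω → ℝ}

lemma aux_integrable_mul (hX : MemLp X 2 μ) (hY : MemLp Y 2 μ) :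
    Integrable (fun ω => X ω * Y ω) μ := by
  have : MemLp (X • Y) 1 μ := hY.smul hX (hpqr := ⟨by simp only [one_div, inv_one]; rw [ENNReal.inv_two_add_inv_two]⟩)
  rw [memLp_one_iff_integrable] at this
  exact this

lemma cov_eq (hX : MemLp X 2 μ) (hY : MemLp Y 2 μ) :
    cov μ X Y = (∫ ω, X ω * Y ω ∂μ) - (∫ ω, X ω ∂μ) * (∫ ω, Y ω ∂μ) := by
  have hXi : Integrable X μ := hX.integrable one_le_two
  have hYi : Integrable Y μ := hY.integrable one_le_two
  have hXY := aux_integrable_mul hX hY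
  unfold cov
  have : ∀ ω, (X ω - ∫ x, X x ∂μ) * (Y ω - ∫ x, Y x ∂μ)
      = X ω * Y ω - (∫ x, X x ∂μ) * Y ω - (∫ x, Y x ∂μ) * X ω
        + (∫ x, X x ∂μ) * (∫ x, Y x ∂μ) := by
    intro ω; ring
  simp_rw [this]
  rw [integral_add, integral_sub, integral_sub, integral_const_mul, integral_const_mul,
    integral_const]
  · simp; ring
  · exact hXY
  · exact hYi.const_mul _
  · exact (hXY.sub (hYi.const_mul _))
  · exact hXi.const_mul _
  · exact ((hXY.sub (hYi.const_mul _)).sub (hXi.const_mul _))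
  · exact integrable_const _

lemma cov_self (hX : MemLp X 2 μ) : cov μ X X = variance X μ := by
  rw [cov_eq hX hX, variance_eq_sub hX]
  simp [sq]

lemma cov_indep (h : IndepFun X Y μ) (hX : MemLp X 2 μ) (hY : MemLp Y 2 μ) :
    cov μ X Y = 0 := by
  rw [cov_eq hX hY]
  have := h.integral_mul_eq_mul_integral hX.1 hY.1
  have h2 : (∫ ω, X ω * Y ω ∂μ) = ∫ ω, (X * Y) ω ∂μ := rfl
  rw [h2, this]
  ring

lemma cov_sum_sum {ι κ : Type*} (s : Finset ι) (t : Finset κ)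
    (X : ι → Ω → ℝ) (Y : κ → Ω → ℝ)
    (hX : ∀ i ∈ s, MemLp (X i) 2 μ) (hY : ∀ j ∈ t, MemLp (Y j) 2 μ) :
    cov μ (fun ω => ∑ i ∈ s, X i ω) (fun ω => ∑ j ∈ t, Y j ω)
      = ∑ i ∈ s, ∑ j ∈ t, cov μ (X i) (Y j) := by
  have hXs : MemLp (fun ω => ∑ i ∈ s, X i ω) 2 μ := by
    have h := memLp_finset_sum' (μ := μ) (p := 2) s hX
    have hfun : (fun ω => ∑ i ∈ s, X i ω) = ∑ i ∈ s, X i := by funext ω; simp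
    rw [hfun]; exact h
  have hYs : MemLp (fun ω => ∑ j ∈ t, Y j ω) 2 μ := by
    have h := memLp_finset_sum' (μ := μ) (p := 2) t hY
    have hfun : (fun ω => ∑ j ∈ t, Y j ω) = ∑ j ∈ t, Y j := by funext ω; simp
    rw [hfun]; exact h
  rw [cov_eq hXs hYs]
  have h1 : (∫ ω, (∑ i ∈ s, X i ω) * (∑ j ∈ t, Y j ω) ∂μ)
      = ∑ i ∈ s, ∑ j ∈ t, ∫ ω, X i ω * Y j ω ∂μ := by
    have : ∀ ω, (∑ i ∈ s, X i ω) * (∑ j ∈ t, Y j ω)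
        = ∑ i ∈ s, ∑ j ∈ t, X i ω * Y j ω := by
      intro ω; rw [Finset.sum_mul_sum]
    simp_rw [this]
    rw [integral_finset_sum]
    · exact Finset.sum_congr rfl fun i hi => integral_finset_sum _
        fun j hj => aux_integrable_mul (hX i hi) (hY j hj)
    · exact fun i hi => integrable_finset_sum _
        fun j hj => aux_integrable_mul (hX i hi) (hY j hj)
  have h2 : (∫ ω, (∑ i ∈ s, X i ω) ∂μ) = ∑ i ∈ s, ∫ ω, X i ω ∂μ :=
    integral_finset_sum _ fun i hi => (hX i hi).integrable one_le_two
  have h3 : (∫ ω, (∑ j ∈ t, Y j ω) ∂μ) = ∑ j ∈ t, ∫ ω, Y j ω ∂μ :=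
    integral_finset_sum _ fun j hj => (hY j hj).integrable one_le_two
  rw [h1, h2, h3, Finset.sum_mul_sum, ← Finset.sum_sub_distrib]
  refine Finset.sum_congr rfl fun i hi => ?_
  rw [← Finset.sum_sub_distrib]
  exact Finset.sum_congr rfl fun j hj => (cov_eq (hX i hi) (hY j hj)).symm

end Aux

/-- Proposition 1, edges sharing one node, SNPs in different SNP-sets. -/
theorem nrss_cor_shared_node_diff_set
    {Ω Q V P : Type*} [MeasurableSpace Ω]
    (μ : Measure Ω) [IsProbabilityMeasure μ]
    (q : P → Q)
    (F : Q → Ω → ℝ) (G : V → Ω → ℝ) (H : V × P → Ω → ℝ)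
    (σf2 σg2 σh2 : ℝ)
    (hIndep : iIndepFun (m := fun _ : Q ⊕ (V ⊕ V × P) => (inferInstance : MeasurableSpace ℝ))
      (Sum.elim F (Sum.elim G H)) μ)
    (hFmem : ∀ i, MemLp (F i) 2 μ)
    (hGmem : ∀ i, MemLp (G i) 2 μ)
    (hHmem : ∀ i, MemLp (H i) 2 μ)
    (hFvar : ∀ i, variance (F i) μ = σf2)
    (hGvar : ∀ i, variance (G i) μ = σg2)
    (hHvar : ∀ i, variance (H i) μ = σh2)
    (L : V → V → P → Ω → ℝ)
    (hL : ∀ v v' p ω, L v v' p ω = F (q p) ω + G v ω + G v' ω + H (v, p) ω + H (v', p) ω)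
    (v1 v2 v3 : V) (h12 : v1 ≠ v2) (h13 : v1 ≠ v3) (h23 : v2 ≠ v3)
    (p p' : P) (hp : p ≠ p') (hq : q p ≠ q p')
    (hpos : 0 < σf2 + 2 * σg2 + 2 * σh2) :
    cor μ (L v1 v3 p) (L v2 v3 p') = σg2 / (σf2 + 2 * σg2 + 2 * σh2) := by
  classical
  set T := Sum.elim F (Sum.elim G H) with hT
  have hTmem : ∀ i, MemLp (T i) 2 μ := by
    rintro (i | v | vp)
    · exact hFmem i
    · exact hGmem v
    · exact hHmem vp
  have covTT : ∀ i j : Q ⊕ (V ⊕ V × P),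
      cov μ (T i) (T j) = if i = j then variance (T i) μ else 0 := by
    intro i j
    by_cases h : i = j
    · subst h; simp [cov_self (hTmem i)]
    · simp [h, cov_indep (hIndep.indepFun h) (hTmem i) (hTmem j)]
  set idx : V → V → P → Fin 5 → Q ⊕ (V ⊕ V × P) := fun v v' r k =>
    ![Sum.inl (q r), Sum.inr (Sum.inl v), Sum.inr (Sum.inl v'),
      Sum.inr (Sum.inr (v, r)), Sum.inr (Sum.inr (v', r))] k with hidx
  have hLsum : ∀ v v' r, L v v' r = fun ω => ∑ k : Fin 5, T (idx v v' r k) ω := by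
    intro v v' r
    funext ω
    rw [hL, Fin.sum_univ_five]
    simp only [hidx, hT, Matrix.cons_val_zero, Matrix.cons_val_one, Matrix.head_cons,
      Matrix.cons_val_two, Matrix.tail_cons, Matrix.cons_val_three, Matrix.cons_val_four,
      Matrix.head_fin_const, Sum.elim_inl, Sum.elim_inr]
  have hmem5 : ∀ v v' r, ∀ k ∈ (Finset.univ : Finset (Fin 5)),
      MemLp (T (idx v v' r k)) 2 μ := fun v v' r k _ => hTmem _
  have covL : ∀ va vb ra vc vd rc,
      cov μ (L va vb ra) (L vc vd rc)
        = ∑ k : Fin 5, ∑ l : Fin 5, cov μ (T (idx va vb ra k)) (T (idx vc vd rc l)) := by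
    intro va vb ra vc vd rc
    rw [hLsum, hLsum]
    exact cov_sum_sum _ _ _ _ (hmem5 va vb ra) (hmem5 vc vd rc)
  have varL : ∀ v v' r, v ≠ v' → variance (L v v' r) μ = σf2 + 2 * σg2 + 2 * σh2 := by
    intro v v' r hvv
    have hmem : MemLp (L v v' r) 2 μ := by
      rw [hLsum]
      have h := memLp_finset_sum' (μ := μ) (p := 2) Finset.univ (hmem5 v v' r)
      have hfun : (fun ω => ∑ k : Fin 5, T (idx v v' r k) ω)
          = ∑ k : Fin 5, (fun ω => T (idx v v' r k) ω) := by funext ω; simp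
      rw [hfun]; exact h
    rw [← cov_self hmem, covL]
    simp only [Fin.sum_univ_five, covTT, hidx]
    simp only [Matrix.cons_val_zero, Matrix.cons_val_one, Matrix.head_cons,
      Matrix.cons_val_two, Matrix.tail_cons, Matrix.cons_val_three, Matrix.cons_val_four,
      Matrix.head_fin_const]
    simp only [Sum.inl.injEq, Sum.inr.injEq, Prod.mk.injEq, reduceCtorEq,
      hvv, Ne.symm hvv, and_true, and_false, if_false, if_true, ite_false, ite_true,
      eq_self_iff_true, true_and, if_pos]
    simp only [hT, Sum.elim_inl, Sum.elim_inr, hFvar, hGvar, hHvar]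
    ring
  have covmain : cov μ (L v1 v3 p) (L v2 v3 p') = σg2 := by
    rw [covL]
    simp only [Fin.sum_univ_five, covTT, hidx]
    simp only [Matrix.cons_val_zero, Matrix.cons_val_one, Matrix.head_cons,
      Matrix.cons_val_two, Matrix.tail_cons, Matrix.cons_val_three, Matrix.cons_val_four,
      Matrix.head_fin_const]
    simp only [Sum.inl.injEq, Sum.inr.injEq, Prod.mk.injEq, reduceCtorEq,
      hq, hp, h12, h13, Ne.symm h23, and_true, and_false, false_and, if_false, if_true,
      ite_false, ite_true, eq_self_iff_true, true_and]
    simp only [hT, Sum.elim_inl, Sum.elim_inr, hFvar, hGvar, hHvar]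
    ring
  rw [cor, covmain, varL v1 v3 p h13, varL v2 v3 p' h23,
    Real.mul_self_sqrt hpos.le]
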